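/- Let S be a nonempty set equipped with an involution σ : S → S (σ ∘ σ = id), H a real Hilbert space, and Φ_re, Φ_im : S → H. Define the evaluation map ev : H → (S → ℂ) by ev f s := ⟪f, Φ_re s⟫_H + i·⟪f, Φ_im s⟫_H, the complex kernel k(s,s₀) := ev (Φ_re s₀) s − i·ev (Φ_im s₀) s, and the pseudo-kernel c(s,s₀) := ev (Φ_re s₀) s + i·ev (Φ_im s₀) s. Assume the symmetry condition: for every f ∈ H and every s ∈ S, ev f (σ s) = conj(ev f s). Then for all s, s₀ ∈ S: c(s, s₀) = k(s, σ s₀), and k(s, σ s₀) = k(s₀, σ s). -/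

import Mathlib

open ComplexConjugate

/-- **From the symmetry condition to the pseudo-kernel formula (i ⇒ ii, iii).**
In a complex/real RKHS modeled by a real Hilbert space `H` with evaluation
`ev f s = ⟪f, Φre s⟫ + i ⟪f, Φim s⟫`, complex kernel
`k(s,s₀) = ev (Φre s₀) s − i ev (Φim s₀) s` and pseudo-kernel
`c(s,s₀) = ev (Φre s₀) s + i ev (Φim s₀) s`, if every `f ∈ H` satisfies
`ev f (σ s) = conj (ev f s)`, then `c(s,s₀) = k(s, σ s₀)` and
`k(s, σ s₀) = k(s₀, σ s)`. -/
theorem stmt14 {S : Type*} [Nonempty S] (σ : S → S) (hσ : ∀ s, σ (σ s) = s)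
    {H : Type*} [NormedAddCommGroup H] [InnerProductSpace ℝ H] [CompleteSpace H]
    (Φre Φim : S → H) (ev : H → S → ℂ)
    (hev : ∀ f s, ev f s =
      ((inner ℝ f (Φre s) : ℝ) : ℂ) + ((inner ℝ f (Φim s) : ℝ) : ℂ) * Complex.I)
    (k c : S → S → ℂ)
    (hk : ∀ s s₀, k s s₀ = ev (Φre s₀) s - Complex.I * ev (Φim s₀) s)
    (hc : ∀ s s₀, c s s₀ = ev (Φre s₀) s + Complex.I * ev (Φim s₀) s)
    (hsymm : ∀ (f : H) (s : S), ev f (σ s) = conj (ev f s)) :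
    ∀ s s₀ : S, c s s₀ = k s (σ s₀) ∧ k s (σ s₀) = k s₀ (σ s) := by
  have hre : ∀ (f : H) (s : S), (inner ℝ f (Φre (σ s)) : ℝ) = inner ℝ f (Φre s) := by
    intro f s
    have h := hsymm f s
    rw [hev, hev] at h
    have := congrArg Complex.re h
    simpa using this
  have him : ∀ (f : H) (s : S), (inner ℝ f (Φim (σ s)) : ℝ) = - inner ℝ f (Φim s) := by
    intro f s
    have h := hsymm f s
    rw [hev, hev] at h
    have := congrArg Complex.im h
    simpa using this
  have hΦre : ∀ s, Φre (σ s) = Φre s := fun s => ext_inner_left ℝ (fun f => hre f s)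
  have hΦim : ∀ s, Φim (σ s) = -Φim s := by
    intro s
    refine ext_inner_left ℝ (fun f => ?_)
    rw [inner_neg_right]
    exact him f s
  intro s s₀
  constructor
  · rw [hc, hk, hΦre, hΦim]
    simp only [hev, inner_neg_left]
    push_cast
    ring
  · rw [hk, hk, hΦre, hΦim, hΦre, hΦim]
    simp only [hev, inner_neg_left]
    rw [real_inner_comm (Φre s₀) (Φre s), real_inner_comm (Φre s₀) (Φim s),
        real_inner_comm (Φim s₀) (Φre s), real_inner_comm (Φim s₀) (Φim s)]
    push_cast
    ring
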